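/- Let q(z) = q₀z² + 2q₁z + q₂ be a real quadratic. For a real polynomial P of degree at most 4, set E(P)(z) = q(z)²P'''(z) − 3q(z)q'(z)P''(z) + 3(q'(z)² + q(z)q''(z))P'(z) − 6q'(z)q''(z)P(z). Then: (a) E(P) is a polynomial of degree at most 2; (b) writing E(P)(z) = e₀z² + 2e₁z + e₂, one has ⟨E(P), q⟩ = 2e₁q₁ − e₀q₂ − e₂q₀ = 0; and (c) if q is nonzero, then for every real quadratic w with ⟨w,q⟩ = 0 there exists a real polynomial P of degree at most 4 with E(P) = w. -/

import Mathlib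

/-- The expression `E(P)(z) = q(z)²P'''(z) − 3q(z)q'(z)P''(z) + 3(q'(z)² + q(z)q''(z))P'(z)
− 6q'(z)q''(z)P(z)` for the quartic `P(z) = c₀z⁴ + c₁z³ + c₂z² + c₃z + c₄` and the
quadratic `q(z) = q₀z² + 2q₁z + q₂`. -/
noncomputable def EQuartic (q0 q1 q2 c0 c1 c2 c3 c4 z : ℝ) : ℝ :=
  (q0 * z ^ 2 + 2 * q1 * z + q2) ^ 2 * (24 * c0 * z + 6 * c1)
    - 3 * (q0 * z ^ 2 + 2 * q1 * z + q2) * (2 * q0 * z + 2 * q1) *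
        (12 * c0 * z ^ 2 + 6 * c1 * z + 2 * c2)
    + 3 * ((2 * q0 * z + 2 * q1) ^ 2 + (q0 * z ^ 2 + 2 * q1 * z + q2) * (2 * q0)) *
        (4 * c0 * z ^ 3 + 3 * c1 * z ^ 2 + 2 * c2 * z + c3)
    - 6 * (2 * q0 * z + 2 * q1) * (2 * q0) *
        (c0 * z ^ 4 + c1 * z ^ 3 + c2 * z ^ 2 + c3 * z + c4)

/-- (a) `E(P)` is a quadratic `e₀z² + 2e₁z + e₂`; (b) it is orthogonal to `q`,
i.e. `2e₁q₁ − e₀q₂ − e₂q₀ = 0`; (c) if `q ≠ 0`, every real quadratic `w` orthogonal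
to `q` arises as `E(P)` for some quartic `P`. -/
theorem EQuartic_quadratic_orthogonal_surjective (q0 q1 q2 : ℝ) :
    (∀ c0 c1 c2 c3 c4 : ℝ, ∃ e0 e1 e2 : ℝ,
      (∀ z : ℝ, EQuartic q0 q1 q2 c0 c1 c2 c3 c4 z = e0 * z ^ 2 + 2 * e1 * z + e2) ∧
      2 * e1 * q1 - e0 * q2 - e2 * q0 = 0)
    ∧ (¬(q0 = 0 ∧ q1 = 0 ∧ q2 = 0) →
      ∀ w0 w1 w2 : ℝ, 2 * w1 * q1 - (w2 * q0 + w0 * q2) = 0 →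
        ∃ c0 c1 c2 c3 c4 : ℝ, ∀ z : ℝ,
          EQuartic q0 q1 q2 c0 c1 c2 c3 c4 z = w0 * z ^ 2 + 2 * w1 * z + w2) := by
  constructor
  · intro c0 c1 c2 c3 c4
    refine ⟨24*q1*q2*c0 - (12*q1^2 + 6*q0*q2)*c1 + 12*q0*q1*c2 - 6*q0^2*c3,
      12*q2^2*c0 - 6*q1*q2*c1 + 6*q0*q1*c3 - 12*q0^2*c4,
      6*q2^2*c1 - 12*q1*q2*c2 + (12*q1^2 + 6*q0*q2)*c3 - 24*q0*q1*c4, ?_, by ring⟩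
    intro z; unfold EQuartic; ring
  · intro hq w0 w1 w2 hw
    by_cases h0 : q0 ≠ 0
    · refine ⟨0, 0, 0, -w0/(6*q0^2), (q1*(-w0) - q0*w1)/(12*q0^3), ?_⟩
      intro z; unfold EQuartic
      have h2 : (6:ℝ)*q0^2 ≠ 0 := by positivity
      have h3 : (12:ℝ)*q0^3 ≠ 0 := by simp [pow_ne_zero, h0]
      field_simp
      linear_combination (72*q0) * hw
    · push_neg at h0
      by_cases h2 : q2 ≠ 0
      · refine ⟨(q1*w2 + q2*w1)/(12*q2^3), w2/(6*q2^2), 0, 0, 0, ?_⟩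
        intro z; unfold EQuartic
        have h6 : (6:ℝ)*q2^2 ≠ 0 := by positivity
        have h12 : (12:ℝ)*q2^3 ≠ 0 := by simp [pow_ne_zero, h2]
        field_simp
        linear_combination (72*q2^2*z^2) * hw
      · push_neg at h2
        have h1 : q1 ≠ 0 := by
          intro h; exact hq ⟨h0, h, h2⟩
        have hw1 : w1 = 0 := by
          have := hw
          rw [h0, h2] at this
          have : 2 * w1 * q1 = 0 := by linarith
          rcases mul_eq_zero.mp this with h | h
          · linarith
          · exact absurd h h1
        refine ⟨0, -w0/(12*q1^2), 0, w2/(12*q1^2), 0, ?_⟩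
        intro z; unfold EQuartic
        have h12 : (12:ℝ)*q1^2 ≠ 0 := by positivity
        rw [h0, h2, hw1]
        field_simp
        ring
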